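/- A first-passage time with log-convex PMF either is geometric or permits beneficial restart at every time: suppose u(n) > 0 for all n ≥ 0 and u(n)² ≤ u(n−1)·u(n+1) for all n ≥ 1 (log-convexity), and u has finite mean μ. Then either there exists ρ ∈ (0,1) with u(n) = ρ·(1−ρ)^n for all n (in which case S(n) = 0 for all n), or S(n) < 0 for all n ≥ 0 (so every non-preemptive sharp restart is beneficial). -/
import Mathlib

theorem log_convex_geometric_or_all_beneficial
    (u : ℕ → ℝ) (hu0 : ∀ n, 0 < u n) (hu1 : ∑' n, u n = 1)
    (hmean : Summable (fun n : ℕ => (n : ℝ) * u n))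
    (μ : ℝ) (hμ : μ = ∑' n : ℕ, (n : ℝ) * u n)
    (U S : ℕ → ℝ)
    (hU : ∀ n, U n = ∑ k ∈ Finset.range (n + 1), u k)
    (hS : ∀ n, S n = ∑ k ∈ Finset.range (n + 1), (1 - U k - u k * μ))
    (hlogconvex : ∀ n, 1 ≤ n → (u n) ^ 2 ≤ u (n - 1) * u (n + 1)) :
    (∃ ρ : ℝ, ρ ∈ Set.Ioo (0 : ℝ) 1 ∧ (∀ n, u n = ρ * (1 - ρ) ^ n) ∧ ∀ n, S n = 0) ∨
      (∀ n, S n < 0) := by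
  classical
  have hupos : ∀ n, 0 ≤ u n := fun n => (hu0 n).le
  have hsum : Summable u := by
    by_contra h
    rw [tsum_eq_zero_of_not_summable h] at hu1
    norm_num at hu1
  have hsh : ∀ n : ℕ, Summable (fun i => u (n + i)) := by
    intro n
    have := (summable_nat_add_iff n).2 hsum
    simpa [add_comm] using this
  set T : ℕ → ℝ := fun n => ∑' i, u (n + i) with hTdef
  have hT0 : T 0 = 1 := by simpa [hTdef] using hu1
  have hTrec : ∀ n, T n = u n + T (n + 1) := by
    intro n
    have h := Summable.tsum_eq_zero_add (hsh n)
    simp only [add_zero] at h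
    show (∑' i, u (n + i)) = u n + ∑' i, u ((n+1) + i)
    rw [h]
    congr 1
    exact tsum_congr fun i => by congr 1; omega
  have hTpos : ∀ n, 0 < T n := by
    intro n
    have h1 : u (n + 0) ≤ T n := Summable.le_tsum (hsh n) 0 (fun j _ => hupos _)
    have := hu0 (n + 0)
    linarith
  have hTnonneg : ∀ n, 0 ≤ T n := fun n => (hTpos n).le
  have hUT : ∀ n, ∑ k ∈ Finset.range n, u k = 1 - T n := by
    intro n; induction n with
    | zero => simp [hT0]
    | succ n ih => rw [Finset.sum_range_succ, ih, hTrec n]; ring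
  -- log-convexity of T
  have hTlc : ∀ n, T (n+1) ^ 2 ≤ T n * T (n+2) := by
    intro n
    have hpt : ∀ i : ℕ, u (n+1+i) ≤ Real.sqrt (u (n+i)) * Real.sqrt (u (n+2+i)) := by
      intro i
      have h := hlogconvex (n+i+1) (by omega)
      have e1 : n+i+1-1 = n+i := by omega
      have e2 : n+i+1+1 = n+2+i := by omega
      rw [e1, e2] at h
      have h3 : u (n+1+i) ≤ Real.sqrt (u (n+i) * u (n+2+i)) := by
        apply Real.le_sqrt_of_sq_le
        have e3 : n+1+i = n+i+1 := by omega
        rw [e3]; exact h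
      rwa [Real.sqrt_mul (hupos _)] at h3
    have hsqsum : Summable (fun i => Real.sqrt (u (n+i)) * Real.sqrt (u (n+2+i))) := by
      apply Summable.of_nonneg_of_le
        (fun i => mul_nonneg (Real.sqrt_nonneg _) (Real.sqrt_nonneg _))
        (fun i => ?_) (((hsh n).add (hsh (n+2))).div_const 2)
      have ha := Real.sq_sqrt (hupos (n+i))
      have hb := Real.sq_sqrt (hupos (n+2+i))
      nlinarith [sq_nonneg (Real.sqrt (u (n+i)) - Real.sqrt (u (n+2+i)))]
    have hCS : ∑' i, Real.sqrt (u (n+i)) * Real.sqrt (u (n+2+i)) ≤ Real.sqrt (T n * T (n+2)) := by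
      apply Summable.tsum_le_of_sum_le hsqsum
      intro s
      apply Real.le_sqrt_of_sq_le
      calc (∑ i ∈ s, Real.sqrt (u (n+i)) * Real.sqrt (u (n+2+i)))^2
          ≤ (∑ i ∈ s, Real.sqrt (u (n+i))^2) * ∑ i ∈ s, Real.sqrt (u (n+2+i))^2 :=
            Finset.sum_mul_sq_le_sq_mul_sq s _ _
        _ = (∑ i ∈ s, u (n+i)) * ∑ i ∈ s, u (n+2+i) := by
            rw [Finset.sum_congr rfl (fun i _ => Real.sq_sqrt (hupos (n+i))),
              Finset.sum_congr rfl (fun i _ => Real.sq_sqrt (hupos (n+2+i)))]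
        _ ≤ T n * T (n+2) := by
            apply mul_le_mul (Summable.sum_le_tsum s (fun i _ => hupos _) (hsh n))
              (Summable.sum_le_tsum s (fun i _ => hupos _) (hsh (n+2)))
              (Finset.sum_nonneg fun i _ => hupos _) (hTnonneg n)
    have hT1le : T (n+1) ≤ Real.sqrt (T n * T (n+2)) :=
      le_trans (Summable.tsum_le_tsum hpt (hsh (n+1)) hsqsum) hCS
    calc T (n+1)^2 ≤ Real.sqrt (T n * T (n+2)) ^ 2 :=
          pow_le_pow_left₀ (hTnonneg _) hT1le 2
      _ = T n * T (n+2) := Real.sq_sqrt (mul_nonneg (hTnonneg n) (hTnonneg _))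
  -- ratios
  set r : ℕ → ℝ := fun n => T (n+1) / T n with hrdef
  have hrpos : ∀ n, 0 < r n := fun n => div_pos (hTpos _) (hTpos _)
  have hrT : ∀ n, T (n+1) = r n * T n := fun n => (div_mul_cancel₀ _ (hTpos n).ne').symm
  have hrmono : Monotone r := by
    apply monotone_nat_of_le_succ
    intro n
    rw [hrdef]
    dsimp only
    rw [div_le_div_iff₀ (hTpos n) (hTpos (n+1))]
    nlinarith [hTlc n]
  -- supermultiplicativity
  have hsuper : ∀ a b : ℕ, T a * T b ≤ T (a + b) := by
    intro a
    induction a with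
    | zero => intro b; simp [hT0]
    | succ a ih =>
      intro b
      have e : a + 1 + b = (a + b) + 1 := by omega
      rw [e, hrT (a+b), hrT a]
      have h1 := ih b
      have h2 : r a ≤ r (a+b) := hrmono (Nat.le_add_right a b)
      nlinarith [hrpos a, hTpos (a+b), hTpos b, hTpos a]
  -- strict supermultiplicativity in the non-geometric case
  have hstrict : ∀ m, r m < r (m+1) → ∀ a b : ℕ, m + 1 ≤ b → T (a+1) * T b < T (a+1+b) := by
    intro m hm a
    induction a with
    | zero =>
      intro b hb
      have h1 : r 0 ≤ r m := hrmono (Nat.zero_le m)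
      have h2 : r (m+1) ≤ r b := hrmono hb
      have e : 0 + 1 + b = b + 1 := by omega
      rw [e, hrT b]
      have hT1 : T (0+1) = r 0 := by rw [hrT 0, hT0, mul_one]
      rw [hT1]
      nlinarith [hTpos b]
    | succ a ih =>
      intro b hb
      have e : a + 1 + 1 + b = (a + 1 + b) + 1 := by omega
      rw [e, hrT (a+1+b), hrT (a+1)]
      have h1 := ih b hb
      have h2 : r (a+1) ≤ r (a+1+b) := hrmono (Nat.le_add_right _ _)
      nlinarith [hrpos (a+1), hTpos (a+1+b), hTpos b, hTpos (a+1)]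
  -- μ equals the sum of tails
  have hμ0 : 0 ≤ μ := by
    rw [hμ]
    exact tsum_nonneg fun n => mul_nonneg (Nat.cast_nonneg n) (hupos n)
  have hofT : ∀ n, ENNReal.ofReal (T n) = ∑' i, ENNReal.ofReal (u (n + i)) :=
    fun n => ENNReal.ofReal_tsum_of_nonneg (fun i => hupos _) (hsh n)
  have hkey : ∑' j : ℕ, ENNReal.ofReal (T (j+1)) = ENNReal.ofReal μ := by
    have step1 : ∀ j : ℕ, (∑' i : ℕ, ENNReal.ofReal (u (j+1+i)))
        = ∑' i : ℕ, (if j < i then ENNReal.ofReal (u i) else 0) := by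
      intro j
      have hinj : Function.Injective (fun i : ℕ => j+1+i) := fun a b h => by
        have h' : j+1+a = j+1+b := h
        omega
      have hsupp : Function.support (fun x : ℕ => if j < x then ENNReal.ofReal (u x) else 0)
          ⊆ Set.range (fun i : ℕ => j+1+i) := by
        intro x hx
        by_cases h : j < x
        · exact ⟨x - j - 1, show j+1+(x-j-1) = x by omega⟩
        · simp [h] at hx
      have heq := hinj.tsum_eq hsupp
      rw [← heq]
      apply tsum_congr
      intro i
      have hlt : j < j + 1 + i := by omega
      simp [hlt]
    calc ∑' j : ℕ, ENNReal.ofReal (T (j+1))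
        = ∑' j : ℕ, ∑' i : ℕ, (if j < i then ENNReal.ofReal (u i) else 0) := by
          apply tsum_congr; intro j
          rw [hofT (j+1)]
          exact step1 j
      _ = ∑' i : ℕ, ∑' j : ℕ, (if j < i then ENNReal.ofReal (u i) else 0) := ENNReal.tsum_comm
      _ = ∑' i : ℕ, (i : ENNReal) * ENNReal.ofReal (u i) := by
          apply tsum_congr; intro i
          rw [tsum_eq_sum (s := Finset.range i)
            (fun j hj => if_neg (by simpa using hj))]
          rw [Finset.sum_congr rfl
            (g := fun _ => ENNReal.ofReal (u i))
            (fun j hj => if_pos (Finset.mem_range.1 hj))]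
          simp [Finset.sum_const, nsmul_eq_mul]
      _ = ∑' i : ℕ, ENNReal.ofReal ((i:ℝ) * u i) := by
          apply tsum_congr; intro i
          rw [ENNReal.ofReal_mul (by positivity)]
          simp
      _ = ENNReal.ofReal μ := by
          rw [← ENNReal.ofReal_tsum_of_nonneg
            (fun n => mul_nonneg (Nat.cast_nonneg n) (hupos n)) hmean, hμ]
  have hsT : Summable (fun j : ℕ => T (j+1)) := by
    have hne : (∑' j : ℕ, ENNReal.ofReal (T (j+1))) ≠ ⊤ := by
      rw [hkey]; exact ENNReal.ofReal_ne_top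
    have h2 := ENNReal.summable_toReal hne
    exact h2.congr fun j => ENNReal.toReal_ofReal (hTnonneg _)
  have hμT : μ = ∑' j : ℕ, T (j+1) := by
    have h2 := ENNReal.ofReal_tsum_of_nonneg (fun j => hTnonneg (j+1)) hsT
    rw [← h2] at hkey
    exact ((ENNReal.ofReal_eq_ofReal_iff
      (tsum_nonneg fun j => hTnonneg (j+1)) hμ0).1 hkey).symm
  have hshT : ∀ n : ℕ, Summable (fun j : ℕ => T (n+1+(j+1))) := by
    intro n
    have h := (summable_nat_add_iff (f := fun j => T (j+1)) (n+1)).2 hsT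
    exact h.congr fun j => by congr 1; omega
  have htail : ∀ n : ℕ, ∑' j : ℕ, T (n+1+(j+1))
      = (∑' j : ℕ, T (j+1)) - ∑ k ∈ Finset.range (n+1), T (k+1) := by
    intro n
    have h := Summable.sum_add_tsum_nat_add (f := fun j => T (j+1)) (n+1) hsT
    have h2 : ∑' (i:ℕ), T (i + (n+1) + 1) = ∑' j : ℕ, T (n+1+(j+1)) :=
      tsum_congr fun i => by congr 1; omega
    rw [h2] at h
    linarith
  have hSeq : ∀ n, S n = ∑' j : ℕ, (T (n+1) * T (j+1) - T (n+1+(j+1))) := by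
    intro n
    have hLHS : S n = ∑ k ∈ Finset.range (n+1), T (k+1) - (1 - T (n+1)) * μ := by
      rw [hS n]
      have hterm : ∀ k, 1 - U k - u k * μ = T (k+1) - u k * μ := by
        intro k; rw [hU k, hUT (k+1)]; ring
      rw [Finset.sum_congr rfl (fun k _ => hterm k), Finset.sum_sub_distrib,
        ← Finset.sum_mul, hUT (n+1)]
    rw [Summable.tsum_sub (hsT.mul_left _) (hshT n), tsum_mul_left, htail n, ← hμT, hLHS]
    ring
  have hSle : ∀ n j : ℕ, T (n+1) * T (j+1) - T (n+1+(j+1)) ≤ 0 :=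
    fun n j => sub_nonpos.mpr (hsuper (n+1) (j+1))
  have hSsummable : ∀ n, Summable (fun j : ℕ => T (n+1) * T (j+1) - T (n+1+(j+1))) :=
    fun n => (hsT.mul_left _).sub (hshT n)
  by_cases hgeo : ∀ k, r k = r 0
  · left
    have hq : ∀ n, T n = (r 0) ^ n := by
      intro n; induction n with
      | zero => simp [hT0]
      | succ n ih => rw [hrT n, hgeo n, ih]; ring
    have hq0 : 0 < r 0 := hrpos 0
    have hq1 : r 0 < 1 := by
      have h0 := hTrec 0
      rw [hT0] at h0
      have h1 : T 1 = r 0 := by rw [hq 1, pow_one]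
      have := hu0 0
      linarith
    refine ⟨1 - r 0, ⟨by linarith, by linarith⟩, fun n => ?_, fun n => ?_⟩
    · have h1 : u n = T n - T (n+1) := by have := hTrec n; linarith
      rw [h1, hq n, hq (n+1)]; ring
    · rw [hSeq n]
      have hz : ∀ j : ℕ, T (n+1) * T (j+1) - T (n+1+(j+1)) = 0 := by
        intro j
        rw [hq (n+1), hq (j+1), hq (n+1+(j+1)), ← pow_add]
        ring_nf
      rw [tsum_congr hz, tsum_zero]
  · right
    push_neg at hgeo
    obtain ⟨k, hk⟩ := hgeo
    have hm : ∃ m, r m < r (m+1) := by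
      by_contra h
      push_neg at h
      have hconst : ∀ m, r m = r 0 := by
        intro m; induction m with
        | zero => rfl
        | succ m ih => exact le_antisymm (ih ▸ h m) (hrmono (Nat.zero_le _))
      exact hk (hconst k)
    obtain ⟨m, hm⟩ := hm
    intro n
    rw [hSeq n]
    have hterm : T (n+1) * T (m+1+1) - T (n+1+(m+1+1)) < 0 := by
      have h := hstrict m hm n (m+2) (by omega)
      have e : m + 1 + 1 = m + 2 := by omega
      rw [e]
      linarith
    have hneg : ∀ j, 0 ≤ -(T (n+1) * T (j+1) - T (n+1+(j+1))) :=
      fun j => by have := hSle n j; linarith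
    have hsumneg : Summable (fun j : ℕ => -(T (n+1) * T (j+1) - T (n+1+(j+1)))) :=
      (hSsummable n).neg
    have hle := Summable.le_tsum hsumneg (m+1) (fun j _ => hneg j)
    rw [tsum_neg] at hle
    linarith
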